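/- Let x₀ ∈ ℝ, b > 0, B > 0, and let a : ℕ → ℂ be such that the series ∑ₖ a_k x^k converges to f(x₀ + x) for every x ∈ (−b, b), and ∑ₖ |a_k| b^k ≤ B (with this series summable). Then there exists a sequence c : ℕ → ℂ such that: (i) for every y ∈ (−1, 1) the series ∑ₖ c_k y^k converges to g(y) := f(x₀ + (2b/π)·arcsin(y)); (ii) ∑ₖ |c_k| ≤ B; and (iii) for every δ > 0, every ν ∈ (0, 1], and every natural number T with T ≥ ln(B/δ)/ν, one has |g(y) − ∑_{k=0}^{T−1} c_k y^k| ≤ δ for all y ∈ [−1+ν, 1−ν]. -/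

import Mathlib

open Real Set Finset

namespace TaylorArcsinAux

/-- Coefficients of the power series of `(1-x)^(-1/2)`. -/
noncomputable def q : ℕ → ℝ
  | 0 => 1
  | m + 1 => q m * (2 * m + 1) / (2 * m + 2)

lemma q_nonneg : ∀ m, 0 ≤ q m
  | 0 => one_pos.le
  | m + 1 => by
    rw [q]
    have := q_nonneg m
    positivity

lemma q_le_one : ∀ m, q m ≤ 1
  | 0 => le_rfl
  | m + 1 => by
    rw [q, div_le_one (by positivity)]
    nlinarith [q_nonneg m, q_le_one m]

lemma q_rec (m : ℕ) : 2 * ((m : ℝ) + 1) * q (m + 1) = (2 * m + 1) * q m := by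
  rw [q]
  field_simp

lemma summable_aux (β : ℕ → ℝ) (C : ℝ) (hβ : ∀ n, |β n| ≤ C * (n + 1)) {t : ℝ}
    (ht : |t| < 1) : Summable fun n => β n * t ^ n := by
  have h0 : (0:ℝ) ≤ C := by
    have := hβ 0
    have := abs_nonneg (β 0); nlinarith
  apply Summable.of_norm
  have hs : Summable fun n : ℕ => C * ((n + 1) * |t| ^ n) := by
    apply Summable.mul_left
    have h1 : Summable fun n : ℕ => (n : ℝ) * |t| ^ n := by
      simpa using summable_pow_mul_geometric_of_norm_lt_one 1 (by simpa using ht)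
    have h2 : Summable fun n : ℕ => |t| ^ n := summable_geometric_of_lt_one (abs_nonneg t) ht
    simpa [add_mul] using h1.add h2
  apply Summable.of_nonneg_of_le (fun n => norm_nonneg _) _ hs
  intro n
  rw [Real.norm_eq_abs, abs_mul, abs_pow]
  have hp : |t| ^ n ≤ 1 := pow_le_one₀ (abs_nonneg t) ht.le
  have : (0:ℝ) ≤ |t| ^ n := by positivity
  nlinarith [hβ n, abs_nonneg (β n), pow_nonneg (abs_nonneg t) n]


lemma summable_powSeries (α : ℕ → ℝ) (hα : ∀ n, |α n| ≤ 1) {y : ℝ} (hy : |y| < 1) :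
    Summable fun n => α n * y ^ n :=
  summable_aux α 1 (fun n => by have := hα n; have : (0:ℝ) ≤ (n:ℝ) := n.cast_nonneg; linarith) hy

lemma summable_derivSeries (α : ℕ → ℝ) (hα : ∀ n, |α n| ≤ 1) {y : ℝ} (hy : |y| < 1) :
    Summable fun n => α n * ((n : ℝ) * y ^ (n - 1)) := by
  rw [← summable_nat_add_iff 1]
  have : ∀ n : ℕ, α (n+1) * (((n:ℝ) + 1) * y ^ n) = (α (n+1) * ((n:ℝ)+1)) * y ^ n := by
    intro n; ring
  simp only [Nat.add_sub_cancel, Nat.cast_add, Nat.cast_one, this]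
  apply summable_aux _ 1 _ hy
  intro n
  rw [abs_mul]
  have h1 := hα (n+1)
  have h2 : |((n:ℝ)+1)| = (n:ℝ)+1 := abs_of_nonneg (by positivity)
  rw [h2, one_mul]
  nlinarith [abs_nonneg (α (n+1)), Nat.cast_nonneg (α := ℝ) n]

lemma hasDerivAt_powSeries (α : ℕ → ℝ) (hα : ∀ n, |α n| ≤ 1) {y : ℝ}
    (hy : y ∈ Ioo (-1:ℝ) 1) :
    HasDerivAt (fun x => ∑' n, α n * x ^ n) (∑' n, α n * ((n : ℝ) * y ^ (n - 1))) y := by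
  have hy' : |y| < 1 := abs_lt.2 ⟨hy.1, hy.2⟩
  set r : ℝ := (1 + |y|) / 2 with hr
  have hr0 : 0 ≤ r := by positivity
  have hr0' : 0 < r := by rw [hr]; positivity
  have hyr : |y| < r := by rw [hr]; linarith
  have hr1 : r < 1 := by rw [hr]; linarith
  have hu : Summable fun n : ℕ => (n : ℝ) * r ^ (n - 1) := by
    rw [← summable_nat_add_iff 1]
    simp only [Nat.add_sub_cancel, Nat.cast_add, Nat.cast_one]
    have h1 : Summable fun n : ℕ => (n : ℝ) * r ^ n := by
      simpa using summable_pow_mul_geometric_of_norm_lt_one 1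
        (by simpa [abs_of_nonneg hr0] using hr1)
    have h2 : Summable fun n : ℕ => r ^ n := summable_geometric_of_lt_one hr0 hr1
    simpa [add_mul] using h1.add h2
  apply hasDerivAt_tsum_of_isPreconnected hu (isOpen_Ioo (a := -r) (b := r))
    (convex_Ioo _ _).isPreconnected
    (g' := fun n x => α n * ((n : ℝ) * x ^ (n - 1)))
    (fun n x _ => (hasDerivAt_pow n x).const_mul (α n))
    _ (show (0:ℝ) ∈ Ioo (-r) r from ⟨by linarith, by linarith⟩)
    _ (abs_lt.1 hyr)
  · intro n x hx
    have hx' : |x| ≤ r := (abs_lt.2 hx).le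
    rw [Real.norm_eq_abs, abs_mul, abs_mul, abs_pow]
    have h1 := hα n
    have h2 : |x| ^ (n-1) ≤ r ^ (n-1) := pow_le_pow_left₀ (abs_nonneg x) hx' _
    have h3 : |((n:ℝ))| = (n:ℝ) := abs_of_nonneg n.cast_nonneg
    rw [h3]
    have h4 : (0:ℝ) ≤ (n:ℝ) := n.cast_nonneg
    calc |α n| * ((n:ℝ) * |x| ^ (n-1)) ≤ 1 * ((n:ℝ) * |x| ^ (n-1)) :=
          mul_le_mul_of_nonneg_right h1 (by positivity)
      _ = (n:ℝ) * |x| ^ (n-1) := one_mul _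
      _ ≤ (n:ℝ) * r ^ (n-1) := mul_le_mul_of_nonneg_left h2 h4
  · apply summable_powSeries α hα
    simp


lemma const_of_hasDerivAt_zero {w : ℝ → ℝ}
    (h : ∀ x ∈ Ioo (-1:ℝ) 1, HasDerivAt w 0 x) {x : ℝ} (hx : x ∈ Ioo (-1:ℝ) 1) :
    w x = w 0 := by
  apply (convex_Ioo (-1:ℝ) 1).is_const_of_fderivWithin_eq_zero
    (𝕜 := ℝ) (f := w)
    (fun z hz => ((h z hz).differentiableAt).differentiableWithinAt) _ hx
    (show (0:ℝ) ∈ Ioo (-1:ℝ) 1 by norm_num)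
  intro z hz
  rw [fderivWithin_of_isOpen isOpen_Ioo hz, ((h z hz).hasFDerivAt).fderiv]
  ext v
  simp

lemma q_abs_le (m : ℕ) : |q m| ≤ 1 := by
  rw [abs_of_nonneg (q_nonneg m)]; exact q_le_one m

lemma hasSum_q_inv_sqrt {x : ℝ} (hx : x ∈ Ioo (-1:ℝ) 1) :
    HasSum (fun m => q m * x ^ m) (1 / Real.sqrt (1 - x)) := by
  have hx' : |x| < 1 := abs_lt.2 ⟨hx.1, hx.2⟩
  have hsum := summable_powSeries q q_abs_le hx'
  -- let h be the sum function
  set h : ℝ → ℝ := fun x => ∑' m, q m * x ^ m with hh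
  -- key : h x * sqrt (1 - x) is constant
  have key : ∀ z ∈ Ioo (-1:ℝ) 1, h z * Real.sqrt (1 - z) = 1 := by
    intro z hz
    have hconst : h z * Real.sqrt (1 - z) = h 0 * Real.sqrt (1 - 0) := by
      apply const_of_hasDerivAt_zero (w := fun x => h x * Real.sqrt (1 - x)) _ hz
      intro x hx
      have hx' : |x| < 1 := abs_lt.2 ⟨hx.1, hx.2⟩
      have h1x : (0:ℝ) < 1 - x := by have := hx.2; linarith
      have hD := hasDerivAt_powSeries q q_abs_le hx
      set D : ℝ := ∑' n, q n * ((n:ℝ) * x ^ (n-1)) with hDdef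
      have hs : HasDerivAt (fun x => Real.sqrt (1 - x)) (-(1 / (2 * Real.sqrt (1 - x)))) x := by
        have h1 : HasDerivAt (fun x : ℝ => 1 - x) (-1) x := by
          simpa using (hasDerivAt_id x).const_sub 1
        have := (Real.hasDerivAt_sqrt h1x.ne').comp x h1
        refine this.congr_deriv ?_
        ring
      have hprod := hD.mul hs
      refine hprod.congr_deriv ?_
      -- goal : 0 = D * sqrt (1 - x) + h x * -(1/(2 sqrt (1-x)))
      have hkey : 2 * (1 - x) * D = h x := by
        -- D = sum over shifted indices
        have hDsum := summable_derivSeries q q_abs_le hx'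
        have hD1 : D = ∑' m, q (m+1) * (((m:ℝ)+1) * x ^ m) := by
          rw [hDdef, hDsum.tsum_eq_zero_add]
          simp
        have hxD : x * D = ∑' n : ℕ, (n:ℝ) * q n * x ^ n := by
          rw [hD1, ← tsum_mul_left]
          rw [Summable.tsum_eq_zero_add (f := fun n : ℕ => (n:ℝ) * q n * x ^ n)]
          · simp only [Nat.cast_zero, zero_mul, Nat.cast_add, Nat.cast_one, zero_add]
            congr 1; funext m; ring
          · apply summable_aux _ 1 _ hx'
            intro n
            rw [abs_mul, abs_of_nonneg (Nat.cast_nonneg (α := ℝ) n),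
              abs_of_nonneg (q_nonneg n), one_mul]
            nlinarith [q_le_one n, q_nonneg n, Nat.cast_nonneg (α := ℝ) n]
        have hDD : D = ∑' n : ℕ, ((n:ℝ)+1) * q (n+1) * x ^ n := by
          rw [hD1]; congr 1; funext m; ring
        have hsum1 : Summable fun n : ℕ => ((n:ℝ)+1) * q (n+1) * x ^ n := by
          apply summable_aux _ 1 _ hx'
          intro n
          rw [abs_mul, abs_of_nonneg (by positivity : (0:ℝ) ≤ (n:ℝ)+1), one_mul]
          nlinarith [q_abs_le (n+1), abs_nonneg (q (n+1)), Nat.cast_nonneg (α := ℝ) n]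
        have hsum2 : Summable fun n : ℕ => (n:ℝ) * q n * x ^ n := by
          apply summable_aux _ 1 _ hx'
          intro n
          rw [abs_mul, abs_of_nonneg (Nat.cast_nonneg (α := ℝ) n), one_mul]
          nlinarith [q_abs_le n, abs_nonneg (q n), Nat.cast_nonneg (α := ℝ) n]
        have expand : 2 * (1 - x) * D = 2 * D - 2 * (x * D) := by ring
        rw [expand, hxD, hDD, ← tsum_mul_left, ← tsum_mul_left,
          ← Summable.tsum_sub (hsum1.mul_left 2) (hsum2.mul_left 2)]
        have : h x = ∑' m : ℕ, q m * x ^ m := rfl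
        rw [this]
        congr 1
        funext n
        have hq := q_rec n
        linear_combination x ^ n * hq
      have hhx : (∑' n : ℕ, q n * x ^ n) = h x := rfl
      rw [hhx, ← hkey]
      set s : ℝ := Real.sqrt (1 - x) with hsdef
      have hsq : s > 0 := Real.sqrt_pos.2 h1x
      have hsq2 : s * s = 1 - x := Real.mul_self_sqrt h1x.le
      rw [← hsq2]
      field_simp
      ring
    have h0 : h 0 = 1 := by
      have hrfl : h 0 = ∑' m : ℕ, q m * (0:ℝ) ^ m := rfl
      rw [hrfl, tsum_eq_single 0 (fun m hm => by simp [zero_pow hm])]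
      simp [q]
    rw [hconst, h0]
    simp
  have hz := key _ hx
  have h1x : (0:ℝ) < 1 - x := by have := hx.2; linarith
  have hsq : Real.sqrt (1 - x) > 0 := Real.sqrt_pos.2 h1x
  have : h x = 1 / Real.sqrt (1 - x) := by
    field_simp at hz ⊢
    linarith
  rw [← this]
  exact hsum.hasSum


/-- Taylor coefficients of arcsin. -/
noncomputable def A : ℕ → ℝ := fun n => if n % 2 = 1 then q (n / 2) / n else 0

lemma A_nonneg (n : ℕ) : 0 ≤ A n := by
  unfold A
  split
  · exact div_nonneg (q_nonneg _) (Nat.cast_nonneg n)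
  · exact le_rfl

lemma A_abs_le (n : ℕ) : |A n| ≤ 1 := by
  rw [abs_of_nonneg (A_nonneg n)]
  unfold A
  split
  · rename_i hmod
    have hn : 1 ≤ n := by omega
    have hn' : (1:ℝ) ≤ (n:ℝ) := by exact_mod_cast hn
    rw [div_le_one (by linarith)]
    calc q (n/2) ≤ 1 := q_le_one _
      _ ≤ (n:ℝ) := hn'
  · exact zero_le_one

lemma A_odd (m : ℕ) : A (2 * m + 1) = q m / (2 * (m:ℝ) + 1) := by
  unfold A
  have h1 : (2 * m + 1) % 2 = 1 := by omega
  have h2 : (2 * m + 1) / 2 = m := by omega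
  rw [if_pos h1, h2]
  push_cast
  ring_nf

lemma A_even (n : ℕ) (h : n % 2 = 0) : A n = 0 := by
  unfold A
  rw [if_neg (by omega)]

lemma hasSum_arcsinSeries {y : ℝ} (hy : y ∈ Ioo (-1:ℝ) 1) :
    HasSum (fun n => A n * y ^ n) (Real.arcsin y) := by
  have hy' : |y| < 1 := abs_lt.2 ⟨hy.1, hy.2⟩
  have hsum := summable_powSeries A A_abs_le hy'
  set S : ℝ → ℝ := fun x => ∑' n, A n * x ^ n with hS
  have key : ∀ x ∈ Ioo (-1:ℝ) 1, S x = Real.arcsin x := by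
    have hconst : ∀ x ∈ Ioo (-1:ℝ) 1,
        S x - Real.arcsin x = S 0 - Real.arcsin 0 := by
      intro x hx
      apply const_of_hasDerivAt_zero (w := fun x => S x - Real.arcsin x) _ hx
      intro x hx
      have hx' : |x| < 1 := abs_lt.2 ⟨hx.1, hx.2⟩
      have hDS := hasDerivAt_powSeries A A_abs_le hx
      have hDval : (∑' n, A n * ((n:ℝ) * x ^ (n-1))) = 1 / Real.sqrt (1 - x ^ 2) := by
        have hx2 : x ^ 2 ∈ Ioo (-1:ℝ) 1 := by
          constructor
          · nlinarith
          · calc x ^ 2 = |x| ^ 2 := (sq_abs x).symm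
              _ < 1 := by nlinarith [abs_nonneg x]
        have hq := hasSum_q_inv_sqrt hx2
        have hinj : Function.Injective (fun m : ℕ => 2 * m + 1) := by
          intro a b h; simp only [] at h; omega
        have hsupp : Function.support (fun n => A n * ((n:ℝ) * x ^ (n-1)))
            ⊆ Set.range (fun m : ℕ => 2 * m + 1) := by
          intro n hn
          rcases Nat.even_or_odd n with he | ho
          · exfalso
            apply hn
            show A n * ((n:ℝ) * x ^ (n-1)) = 0
            rw [A_even n (Nat.even_iff.1 he)]
            ring
          · obtain ⟨m, hm⟩ := ho
            exact ⟨m, by simp only []; omega⟩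
        rw [← hinj.tsum_eq hsupp]
        have : ∀ m : ℕ, A (2*m+1) * (((2*m+1 : ℕ):ℝ) * x ^ ((2*m+1) - 1))
            = q m * (x ^ 2) ^ m := by
          intro m
          rw [A_odd m]
          have h1 : (2*m+1) - 1 = 2*m := by omega
          rw [h1, ← pow_mul]
          have h2 : (2 * (m:ℝ) + 1) ≠ 0 := by positivity
          push_cast
          field_simp
        simp only [this]
        exact hq.tsum_eq
      rw [hDval] at hDS
      have hA := Real.hasDerivAt_arcsin hx.1.ne' hx.2.ne
      exact (hDS.sub hA).congr_deriv (sub_self _)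
    intro x hx
    have h0 : S 0 = 0 := by
      have hrfl : S 0 = ∑' n : ℕ, A n * (0:ℝ) ^ n := rfl
      rw [hrfl, tsum_eq_single 0 (fun m hm => by simp [zero_pow hm])]
      simp [A]
    have := hconst x hx
    rw [h0, Real.arcsin_zero] at this
    linarith
  rw [← key y hy]
  exact hsum.hasSum


open Filter Topology in
lemma sum_A_le (N : ℕ) : ∑ j ∈ Finset.range N, A j ≤ π / 2 := by
  have hcont : Continuous fun z : ℝ => ∑ j ∈ Finset.range N, A j * z ^ j := by
    apply continuous_finset_sum
    intro j _
    exact continuous_const.mul (continuous_pow j)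
  have hlim : Tendsto (fun z : ℝ => ∑ j ∈ Finset.range N, A j * z ^ j)
      (nhdsWithin 1 (Iio 1)) (nhds (∑ j ∈ Finset.range N, A j)) := by
    have := (hcont.tendsto 1).mono_left (nhdsWithin_le_nhds (s := Iio (1:ℝ)))
    simpa using this
  apply le_of_tendsto hlim
  filter_upwards [Ioo_mem_nhdsLT_of_mem (show (1:ℝ) ∈ Ioc (0:ℝ) 1 from ⟨one_pos, le_rfl⟩)]
  intro z hz
  have hz' : z ∈ Ioo (-1:ℝ) 1 := ⟨by linarith [hz.1], hz.2⟩
  have hsum := hasSum_arcsinSeries hz'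
  calc ∑ j ∈ Finset.range N, A j * z ^ j
      ≤ ∑' j, A j * z ^ j := by
        apply Summable.sum_le_tsum _ _ hsum.summable
        intro j _
        exact mul_nonneg (A_nonneg j) (pow_nonneg (by linarith [hz.1]) j)
    _ = Real.arcsin z := hsum.tsum_eq
    _ ≤ π / 2 := Real.arcsin_le_pi_div_two z

lemma summable_A : Summable A := summable_of_sum_range_le A_nonneg sum_A_le

lemma tsum_A_le : ∑' j, A j ≤ π / 2 := Real.tsum_le_of_sum_range_le A_nonneg sum_A_le

/-- Cauchy-product powers of a series with coefficients `d`. -/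
noncomputable def epow (d : ℕ → ℝ) : ℕ → ℕ → ℝ
  | 0 => fun n => if n = 0 then 1 else 0
  | k + 1 => fun n => ∑ p ∈ Finset.HasAntidiagonal.antidiagonal n, epow d k p.1 * d p.2

lemma epow_nonneg (d : ℕ → ℝ) (hd : ∀ j, 0 ≤ d j) : ∀ k n, 0 ≤ epow d k n
  | 0, n => by by_cases h : n = 0 <;> simp [epow, h]
  | k + 1, n => by
    rw [epow]
    exact Finset.sum_nonneg fun p _ => mul_nonneg (epow_nonneg d hd k p.1) (hd p.2)

lemma hasSum_epow (d : ℕ → ℝ) (hd0 : ∀ j, 0 ≤ d j) (hd : Summable d) :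
    ∀ (k : ℕ) (y : ℝ), |y| ≤ 1 →
      HasSum (fun n => epow d k n * y ^ n) ((∑' j, d j * y ^ j) ^ k) := by
  intro k
  induction k with
  | zero =>
    intro y _
    have : (fun n : ℕ => epow d 0 n * y ^ n) = fun n : ℕ => if n = 0 then 1 else 0 := by
      funext n
      by_cases h : n = 0 <;> simp [epow, h]
    rw [this, pow_zero]
    exact hasSum_ite_eq 0 1
  | succ k ih =>
    intro y hy
    have habs : |(|y|)| ≤ 1 := by rwa [abs_abs]
    have hnormf : Summable fun n => ‖epow d k n * y ^ n‖ := by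
      have := (ih |y| habs).summable
      apply this.congr
      intro n
      rw [Real.norm_eq_abs, abs_mul, abs_pow, abs_of_nonneg (epow_nonneg d hd0 k n)]
    have hnormg : Summable fun j => ‖d j * y ^ j‖ := by
      apply hd.of_nonneg_of_le (fun j => norm_nonneg _)
      intro j
      rw [Real.norm_eq_abs, abs_mul, abs_pow, abs_of_nonneg (hd0 j)]
      have : |y| ^ j ≤ 1 := pow_le_one₀ (abs_nonneg y) hy
      nlinarith [hd0 j, pow_nonneg (abs_nonneg y) j]
    have hs := (summable_norm_sum_mul_antidiagonal_of_summable_norm hnormf hnormg).of_norm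
    have ht := tsum_mul_tsum_eq_tsum_sum_antidiagonal_of_summable_norm hnormf hnormg
    have heq : (fun n => epow d (k+1) n * y ^ n)
        = fun n => ∑ p ∈ Finset.HasAntidiagonal.antidiagonal n,
            (epow d k p.1 * y ^ p.1) * (d p.2 * y ^ p.2) := by
      funext n
      rw [epow, Finset.sum_mul]
      apply Finset.sum_congr rfl
      intro p hp
      have hpn : p.1 + p.2 = n := Finset.HasAntidiagonal.mem_antidiagonal.1 hp
      rw [← hpn, pow_add]
      ring
    rw [heq, Summable.hasSum_iff (by exact hs)]
    rw [← ht, (ih y hy).tsum_eq, pow_succ]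

lemma epow_le (d : ℕ → ℝ) (hd0 : ∀ j, 0 ≤ d j) (hd : Summable d) (k n : ℕ) :
    epow d k n ≤ (∑' j, d j) ^ k := by
  have h1 := hasSum_epow d hd0 hd k 1 (by norm_num)
  simp only [one_pow, mul_one] at h1
  exact le_hasSum h1 n fun j _ => epow_nonneg d hd0 k j

end TaylorArcsinAux

set_option maxHeartbeats 1000000 in
open TaylorArcsinAux in
/-- **Taylor series truncation bound after composing with arcsin.**
If `f(x₀ + x) = ∑ₖ aₖ xᵏ` on `(-b, b)` with `∑ₖ |aₖ| bᵏ ≤ B`, then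
`g(y) := f(x₀ + (2b/π) arcsin y)` has a power series `∑ₖ cₖ yᵏ` with `∑ₖ |cₖ| ≤ B`,
and truncating at degree `T - 1` with `T ≥ ln(B/δ)/ν` gives error at most `δ`
on `[-1+ν, 1-ν]`. -/
theorem taylor_arcsin_truncation
    (f : ℝ → ℂ) (x₀ b B : ℝ) (hb : 0 < b) (hB : 0 < B) (a : ℕ → ℂ)
    (hconv : ∀ x ∈ Set.Ioo (-b) b, HasSum (fun k : ℕ => a k * (x : ℂ) ^ k) (f (x₀ + x)))
    (hsum : Summable (fun k : ℕ => ‖a k‖ * b ^ k))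
    (hbound : ∑' k : ℕ, ‖a k‖ * b ^ k ≤ B) :
    ∃ c : ℕ → ℂ,
      (∀ y ∈ Set.Ioo (-1 : ℝ) 1,
        HasSum (fun k : ℕ => c k * (y : ℂ) ^ k)
          (f (x₀ + (2 * b / π) * Real.arcsin y))) ∧
      Summable (fun k : ℕ => ‖c k‖) ∧
      (∑' k : ℕ, ‖c k‖) ≤ B ∧
      ∀ δ : ℝ, 0 < δ → ∀ ν ∈ Set.Ioc (0 : ℝ) 1, ∀ T : ℕ,
        (T : ℝ) ≥ Real.log (B / δ) / ν →
        ∀ y ∈ Set.Icc (-1 + ν) (1 - ν),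
          ‖f (x₀ + (2 * b / π) * Real.arcsin y)
            - ∑ k ∈ Finset.range T, c k * (y : ℂ) ^ k‖ ≤ δ := by
  classical
  have hπ : 0 < π := Real.pi_pos
  have hcoef : 0 < 2 * b / π := by positivity
  set u : ℝ → ℝ := fun y => 2 * b / π * Real.arcsin y with hu
  set d : ℕ → ℝ := fun j => 2 * b / π * A j with hd
  have hd0 : ∀ j, 0 ≤ d j := fun j => mul_nonneg hcoef.le (A_nonneg j)
  have hdsummable : Summable d := summable_A.mul_left _
  have htsum_d_nonneg : 0 ≤ ∑' j, d j := tsum_nonneg hd0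
  have htsum_d : ∑' j, d j ≤ b := by
    rw [hd, tsum_mul_left]
    calc 2 * b / π * ∑' j, A j ≤ 2 * b / π * (π / 2) :=
          mul_le_mul_of_nonneg_left tsum_A_le hcoef.le
      _ = b := by field_simp
  have hu_hasSum : ∀ y ∈ Ioo (-1:ℝ) 1, HasSum (fun j => d j * y ^ j) (u y) := by
    intro y hy
    have := (hasSum_arcsinSeries hy).mul_left (2 * b / π)
    apply this.congr_fun
    intro n
    simp [hd, mul_assoc]
  have hu_mem : ∀ y ∈ Ioo (-1:ℝ) 1, u y ∈ Ioo (-b) b := by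
    intro y hy
    have h1 : Real.arcsin y < π / 2 := Real.arcsin_lt_pi_div_two.2 hy.2
    have h2 : -(π / 2) < Real.arcsin y := Real.neg_pi_div_two_lt_arcsin.2 hy.1
    have h3 : 2 * b / π * (π / 2) = b := by field_simp
    constructor
    · show -b < 2 * b / π * Real.arcsin y
      nlinarith
    · show 2 * b / π * Real.arcsin y < b
      nlinarith
  set e : ℕ → ℕ → ℝ := epow d with he
  have he0 : ∀ k n, 0 ≤ e k n := epow_nonneg d hd0
  have hepow : ∀ (k : ℕ) (y : ℝ), |y| ≤ 1 →
      HasSum (fun n => e k n * y ^ n) ((∑' j, d j * y ^ j) ^ k) :=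
    hasSum_epow d hd0 hdsummable
  -- the weighted coefficient sums
  have hw : ∀ t : ℝ, 0 ≤ t → t ≤ 1 →
      0 ≤ ∑' j, d j * t ^ j ∧ ∑' j, d j * t ^ j ≤ b := by
    intro t ht0 ht1
    have hsumm : Summable fun j => d j * t ^ j := by
      apply hdsummable.of_nonneg_of_le (fun j => mul_nonneg (hd0 j) (pow_nonneg ht0 j))
      intro j
      have : t ^ j ≤ 1 := pow_le_one₀ ht0 ht1
      nlinarith [hd0 j, pow_nonneg ht0 j]
    constructor
    · exact tsum_nonneg fun j => mul_nonneg (hd0 j) (pow_nonneg ht0 j)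
    · calc ∑' j, d j * t ^ j ≤ ∑' j, d j := by
            apply Summable.tsum_le_tsum _ hsumm hdsummable
            intro j
            have : t ^ j ≤ 1 := pow_le_one₀ ht0 ht1
            nlinarith [hd0 j, pow_nonneg ht0 j]
        _ ≤ b := htsum_d
  -- summability of the norm double sum
  have hGnorm : ∀ t : ℝ, 0 ≤ t → t ≤ 1 →
      Summable (fun p : ℕ × ℕ => ‖a p.1‖ * e p.1 p.2 * t ^ p.2) := by
    intro t ht0 ht1
    have ht' : |t| ≤ 1 := by rw [abs_of_nonneg ht0]; exact ht1
    rw [summable_prod_of_nonneg (fun p => by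
      have := he0 p.1 p.2
      have := pow_nonneg ht0 p.2
      positivity)]
    constructor
    · intro k
      have := ((hepow k t ht').summable).mul_left ‖a k‖
      apply this.congr
      intro n; ring
    · apply hsum.of_nonneg_of_le
      · intro k
        exact tsum_nonneg fun n => by
          have := he0 k n; have := pow_nonneg ht0 n; positivity
      · intro k
        have hfib : HasSum (fun n => ‖a k‖ * e k n * t ^ n)
            (‖a k‖ * (∑' j, d j * t ^ j) ^ k) := by
          have := (hepow k t ht').mul_left ‖a k‖
          apply this.congr_fun
          intro n; ring
        rw [hfib.tsum_eq]
        have hwk := hw t ht0 ht1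
        have : (∑' j, d j * t ^ j) ^ k ≤ b ^ k := pow_le_pow_left₀ hwk.1 hwk.2 k
        exact mul_le_mul_of_nonneg_left this (norm_nonneg _)
  -- summability of a k * e k n in ℂ per n
  have hcknorm : ∀ n, Summable (fun k => ‖a k * (e k n : ℂ)‖) := by
    intro n
    apply hsum.of_nonneg_of_le (fun k => norm_nonneg _)
    intro k
    rw [norm_mul, Complex.norm_real, Real.norm_eq_abs, abs_of_nonneg (he0 k n)]
    have h1 : e k n ≤ b ^ k := le_trans (epow_le d hd0 hdsummable k n)
      (pow_le_pow_left₀ htsum_d_nonneg htsum_d k)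
    exact mul_le_mul_of_nonneg_left h1 (norm_nonneg _)
  have hcksumm : ∀ n, Summable (fun k => a k * (e k n : ℂ)) :=
    fun n => (hcknorm n).of_norm
  set c : ℕ → ℂ := fun n => ∑' k, a k * (e k n : ℂ) with hc
  -- Part (i)
  have hmain : ∀ y ∈ Ioo (-1:ℝ) 1,
      HasSum (fun n : ℕ => c n * (y : ℂ) ^ n) (f (x₀ + u y)) := by
    intro y hy
    have hy1 : |y| ≤ 1 := (abs_lt.2 ⟨hy.1, hy.2⟩).le
    set G : ℕ × ℕ → ℂ := fun p => a p.1 * (e p.1 p.2 : ℂ) * (y : ℂ) ^ p.2 with hG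
    have hGsummable : Summable G := by
      apply Summable.of_norm
      have := hGnorm |y| (abs_nonneg y) hy1
      apply this.congr
      intro p
      rw [hG]
      simp only []
      rw [norm_mul, norm_mul, Complex.norm_real, Real.norm_eq_abs,
        abs_of_nonneg (he0 p.1 p.2), norm_pow, Complex.norm_real, Real.norm_eq_abs]
    have hfiber : ∀ k, HasSum (fun n => G (k, n)) (a k * ((u y : ℝ) : ℂ) ^ k) := by
      intro k
      have hre := hepow k y hy1
      rw [(hu_hasSum y hy).tsum_eq] at hre
      have hcx := hre.mapL Complex.ofRealCLM
      have := hcx.mul_left (a k)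
      simp only [Complex.ofRealCLM_apply, Complex.ofReal_pow] at this
      apply this.congr_fun
      intro n
      simp only [hG, Function.comp_apply, Complex.ofRealCLM_apply]
      push_cast
      ring
    have hvalue : HasSum (fun k => a k * ((u y : ℝ) : ℂ) ^ k) (∑' p, G p) :=
      hGsummable.hasSum.prod_fiberwise hfiber
    have hval2 := hconv (u y) (hu_mem y hy)
    have htot : ∑' p, G p = f (x₀ + u y) := hvalue.unique hval2
    have hswap : HasSum (fun p : ℕ × ℕ => G (p.2, p.1)) (f (x₀ + u y)) := by
      rw [← htot]
      exact ((Equiv.prodComm ℕ ℕ).hasSum_iff).2 hGsummable.hasSum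
    apply hswap.prod_fiberwise
    intro n
    have := ((hcksumm n).hasSum).mul_right ((y : ℂ) ^ n)
    apply this.congr_fun
    intro k
    rfl
  -- Norm double sum at t = 1
  have hH : Summable (fun p : ℕ × ℕ => ‖a p.1‖ * e p.1 p.2) := by
    have := hGnorm 1 zero_le_one le_rfl
    apply this.congr
    intro p; simp
  have hCnorm : HasSum (fun n => ∑' k, ‖a k‖ * e k n) (∑' p : ℕ × ℕ, ‖a p.1‖ * e p.1 p.2) := by
    have hswap : HasSum (fun p : ℕ × ℕ => ‖a p.2‖ * e p.2 p.1)
        (∑' p : ℕ × ℕ, ‖a p.1‖ * e p.1 p.2) :=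
      ((Equiv.prodComm ℕ ℕ).hasSum_iff).2 hH.hasSum
    apply hswap.prod_fiberwise
    intro n
    apply Summable.hasSum
    apply Summable.of_nonneg_of_le (fun k => mul_nonneg (norm_nonneg _) (he0 k n)) _ hsum
    intro k
    have h1 : e k n ≤ b ^ k := le_trans (epow_le d hd0 hdsummable k n)
      (pow_le_pow_left₀ htsum_d_nonneg htsum_d k)
    exact mul_le_mul_of_nonneg_left h1 (norm_nonneg _)
  have hHtot : (∑' p : ℕ × ℕ, ‖a p.1‖ * e p.1 p.2) ≤ B := by
    have hfib : ∀ k, HasSum (fun n => ‖a k‖ * e k n) (‖a k‖ * (∑' j, d j) ^ k) := by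
      intro k
      have h1 := hepow k 1 (by norm_num)
      simp only [one_pow, mul_one] at h1
      exact h1.mul_left ‖a k‖
    have hval : HasSum (fun k => ‖a k‖ * (∑' j, d j) ^ k)
        (∑' p : ℕ × ℕ, ‖a p.1‖ * e p.1 p.2) :=
      hH.hasSum.prod_fiberwise hfib
    calc (∑' p : ℕ × ℕ, ‖a p.1‖ * e p.1 p.2) = ∑' k, ‖a k‖ * (∑' j, d j) ^ k := hval.tsum_eq.symm
      _ ≤ ∑' k, ‖a k‖ * b ^ k := by
          apply Summable.tsum_le_tsum _ hval.summable hsum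
          intro k
          exact mul_le_mul_of_nonneg_left
            (pow_le_pow_left₀ htsum_d_nonneg htsum_d k) (norm_nonneg _)
      _ ≤ B := hbound
  have hc_le : ∀ n, ‖c n‖ ≤ ∑' k, ‖a k‖ * e k n := by
    intro n
    rw [hc]
    calc ‖∑' k, a k * (e k n : ℂ)‖ ≤ ∑' k, ‖a k * (e k n : ℂ)‖ :=
          norm_tsum_le_tsum_norm (hcknorm n)
      _ = ∑' k, ‖a k‖ * e k n := by
          congr 1; funext k
          rw [norm_mul, Complex.norm_real, Real.norm_eq_abs, abs_of_nonneg (he0 k n)]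
  have hcsummable : Summable fun n => ‖c n‖ :=
    Summable.of_nonneg_of_le (fun n => norm_nonneg _) hc_le hCnorm.summable
  have hctsum : (∑' n, ‖c n‖) ≤ B := by
    calc (∑' n, ‖c n‖) ≤ ∑' n, ∑' k, ‖a k‖ * e k n :=
          Summable.tsum_le_tsum hc_le hcsummable hCnorm.summable
      _ = ∑' p : ℕ × ℕ, ‖a p.1‖ * e p.1 p.2 := hCnorm.tsum_eq
      _ ≤ B := hHtot
  refine ⟨c, hmain, hcsummable, hctsum, ?_⟩
  -- Part (iv) : truncation
  intro δ hδ ν hν T hT y hy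
  have hν0 : 0 < ν := hν.1
  have hν1 : ν ≤ 1 := hν.2
  have hy1 : |y| ≤ 1 - ν := abs_le.2 ⟨by linarith [hy.1], hy.2⟩
  have hyo : y ∈ Ioo (-1:ℝ) 1 := ⟨by linarith [hy.1], by linarith [hy.2]⟩
  have hg := hmain y hyo
  have hsummg : Summable fun n => c n * (y:ℂ) ^ n := hg.summable
  have hsplit := Summable.sum_add_tsum_nat_add (f := fun n => c n * (y:ℂ) ^ n) T hsummg
  have hgoal : f (x₀ + u y) - ∑ k ∈ Finset.range T, c k * (y:ℂ) ^ k
      = ∑' n, c (n + T) * (y:ℂ) ^ (n + T) := by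
    rw [← hg.tsum_eq, ← hsplit]
    ring
  show ‖f (x₀ + u y) - ∑ k ∈ Finset.range T, c k * (y:ℂ) ^ k‖ ≤ δ
  rw [hgoal]
  have hcs_tail : Summable fun n => ‖c (n + T)‖ :=
    (summable_nat_add_iff T).2 hcsummable
  have htail_le : (∑' n, ‖c (n + T)‖) ≤ B := by
    have := Summable.sum_add_tsum_nat_add (f := fun n => ‖c n‖) T hcsummable
    have hnn : 0 ≤ ∑ i ∈ Finset.range T, ‖c i‖ :=
      Finset.sum_nonneg fun i _ => norm_nonneg _
    linarith [hctsum]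
  have h1ν : 0 ≤ 1 - ν := by linarith
  calc ‖∑' n, c (n + T) * (y:ℂ) ^ (n + T)‖
      ≤ ∑' n, ‖c (n + T) * (y:ℂ) ^ (n + T)‖ := by
        apply norm_tsum_le_tsum_norm
        apply Summable.of_nonneg_of_le (fun n => norm_nonneg _) _
          (hcs_tail.mul_right ((1 - ν) ^ T))
        intro n
        rw [norm_mul, norm_pow, Complex.norm_real, Real.norm_eq_abs]
        have h2 : |y| ^ (n + T) ≤ (1 - ν) ^ T := by
          calc |y| ^ (n + T) = |y| ^ n * |y| ^ T := pow_add _ _ _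
            _ ≤ 1 * (1 - ν) ^ T := by
                apply mul_le_mul
                · exact pow_le_one₀ (abs_nonneg y) (by linarith)
                · exact pow_le_pow_left₀ (abs_nonneg y) hy1 T
                · positivity
                · norm_num
            _ = (1 - ν) ^ T := one_mul _
        exact mul_le_mul_of_nonneg_left h2 (norm_nonneg _)
    _ ≤ ∑' n, ‖c (n + T)‖ * (1 - ν) ^ T := by
        apply Summable.tsum_le_tsum _ _ (hcs_tail.mul_right _)
        · intro n
          rw [norm_mul, norm_pow, Complex.norm_real, Real.norm_eq_abs]
          have h2 : |y| ^ (n + T) ≤ (1 - ν) ^ T := by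
            calc |y| ^ (n + T) = |y| ^ n * |y| ^ T := pow_add _ _ _
              _ ≤ 1 * (1 - ν) ^ T := by
                  apply mul_le_mul
                  · exact pow_le_one₀ (abs_nonneg y) (by linarith)
                  · exact pow_le_pow_left₀ (abs_nonneg y) hy1 T
                  · positivity
                  · norm_num
              _ = (1 - ν) ^ T := one_mul _
          exact mul_le_mul_of_nonneg_left h2 (norm_nonneg _)
        · apply Summable.of_nonneg_of_le (fun n => norm_nonneg _) _
            (hcs_tail.mul_right ((1 - ν) ^ T))
          intro n
          rw [norm_mul, norm_pow, Complex.norm_real, Real.norm_eq_abs]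
          have h2 : |y| ^ (n + T) ≤ (1 - ν) ^ T := by
            calc |y| ^ (n + T) = |y| ^ n * |y| ^ T := pow_add _ _ _
              _ ≤ 1 * (1 - ν) ^ T := by
                  apply mul_le_mul
                  · exact pow_le_one₀ (abs_nonneg y) (by linarith)
                  · exact pow_le_pow_left₀ (abs_nonneg y) hy1 T
                  · positivity
                  · norm_num
              _ = (1 - ν) ^ T := one_mul _
          exact mul_le_mul_of_nonneg_left h2 (norm_nonneg _)
    _ = (∑' n, ‖c (n + T)‖) * (1 - ν) ^ T := tsum_mul_right
    _ ≤ B * (1 - ν) ^ T := by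
        apply mul_le_mul_of_nonneg_right htail_le (by positivity)
    _ ≤ B * Real.exp (-(ν * T)) := by
        apply mul_le_mul_of_nonneg_left _ hB.le
        calc (1 - ν) ^ T ≤ Real.exp (-ν) ^ T := by
              apply pow_le_pow_left₀ h1ν
              nlinarith [Real.add_one_le_exp (-ν)]
          _ = Real.exp (-(ν * T)) := by
              rw [← Real.exp_nat_mul]
              congr 1
              ring
    _ ≤ δ := by
        have hlog : Real.log (B / δ) ≤ ν * T := by
          have hT' : Real.log (B / δ) / ν ≤ (T:ℝ) := hT
          rw [div_le_iff₀ hν0] at hT'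
          calc Real.log (B / δ) ≤ T * ν := hT'
            _ = ν * T := mul_comm _ _
        have h2 : Real.exp (-(ν * T)) ≤ Real.exp (-(Real.log (B / δ))) := by
          apply Real.exp_le_exp.2
          linarith
        have h3 : Real.exp (-(Real.log (B / δ))) = δ / B := by
          rw [Real.exp_neg, Real.exp_log (by positivity)]
          rw [inv_div]
        calc B * Real.exp (-(ν * T)) ≤ B * (δ / B) := by
              rw [← h3]
              exact mul_le_mul_of_nonneg_left h2 hB.le
          _ = δ := by field_simp
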